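/- Let N = (Q, s, δ, F) be't an NFA (over a finite linearly ordered alphabet Σ, single initial state s, every state reachable from s and every state able to reach a final state) and let ≤ be a co-lex order on N. If u < v, then for every α ∈ I_u and every β ∈ I_v such that not both α and β belong to I_u ∩ I_v, it holds α ≺ β (strict co-lex order on words). -/
import Mathlib


/-- Strict co-lexicographic order on words: compare reversed words lexicographically. -/
def colexLt {A : Type} [LinearOrder A] (α β : List A) : Prop :=
  List.Lex (· < ·) α.reverse β.reverse

/-- Co-lexicographic order (reflexive version). -/
def colexLe {A : Type} [LinearOrder A] (α β : List A) : Prop :=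
  colexLt α β ∨ α = β

/-- The prefix closure of a language. -/
def Pref {A : Type} (L : Set (List A)) : Set (List A) :=
  {α | ∃ γ : List A, α ++ γ ∈ L}

/-- The Myhill–Nerode equivalence of a language. -/
def NerodeEq {A : Type} (L : Set (List A)) (α β : List A) : Prop :=
  ∀ γ : List A, α ++ γ ∈ L ↔ β ++ γ ∈ L

/-- A monotone (nondecreasing or nonincreasing) sequence of words w.r.t. co-lex order. -/
def MonotoneSeq {A : Type} [LinearOrder A] (α : ℕ → List A) : Prop :=
  (∀ i, colexLe (α i) (α (i + 1))) ∨ (∀ i, colexLe (α (i + 1)) (α i))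

/-- A partition of the state set into `p` chains with respect to the relation `le`. -/
def IsChainPartition {Q : Type} (le : Q → Q → Prop) (p : ℕ) (f : Fin p → Set Q) : Prop :=
  (∀ q : Q, ∃! i : Fin p, q ∈ f i) ∧
  ∀ i : Fin p, ∀ u ∈ f i, ∀ v ∈ f i, le u v ∨ le v u

/-- A nondeterministic finite automaton with a single initial state. -/
structure NFA' (A Q : Type) where
  start : Q
  delta : Q → A → Set Q
  accept : Set Q

namespace NFA'

variable {A Q : Type}

/-- Extended transition function on words. -/
def deltaStar (N : NFA' A Q) : Q → List A → Set Q
  | q, [] => {q}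
  | q, a :: w => ⋃ r ∈ N.delta q a, N.deltaStar r w

/-- `N.Iw α` is the set of states reached from the initial state reading `α`. -/
def Iw (N : NFA' A Q) (α : List A) : Set Q :=
  N.deltaStar N.start α

/-- `N.Iq q` is the set of words reaching `q` from the initial state. -/
def Iq (N : NFA' A Q) (q : Q) : Set (List A) :=
  {α | q ∈ N.Iw α}

/-- The accepted language. -/
def lang (N : NFA' A Q) : Set (List A) :=
  {α | ∃ q ∈ N.accept, q ∈ N.Iw α}

/-- Labels of transitions entering a state, with the extra bottom symbol `#`
added exactly for the initial state. -/
def lam (N : NFA' A Q) (q : Q) : Set (WithBot A) :=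
  {x | ∃ (a : A) (u : Q), x = (a : WithBot A) ∧ q ∈ N.delta u a} ∪
    {x | q = N.start ∧ x = (⊥ : WithBot A)}

/-- Every state is reachable from the initial state. -/
def Reachable (N : NFA' A Q) : Prop :=
  ∀ q : Q, ∃ α : List A, q ∈ N.Iw α

/-- Every state can reach a final state. -/
def Useful (N : NFA' A Q) : Prop :=
  ∀ q : Q, ∃ (β : List A) (f : Q), f ∈ N.accept ∧ f ∈ N.deltaStar q β

end NFA'

/-- A co-lex order on an NFA: a partial order on the states satisfying Axioms 1 and 2. -/
structure IsColexNFA {A Q : Type} [LinearOrder A] (N : NFA' A Q) (le : Q → Q → Prop) : Prop where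
  refl : ∀ u, le u u
  antisymm : ∀ u v, le u v → le v u → u = v
  trans : ∀ u v w, le u v → le v w → le u w
  ax1 : ∀ u v, le u v → u ≠ v → ∀ a ∈ N.lam u, ∀ b ∈ N.lam v, a ≤ b
  ax2 : ∀ (a : A) (u v u' v' : Q),
      u ∈ N.delta u' a → v ∈ N.delta v' a → le u v → u ≠ v → le u' v'

lemma deltaStar_snoc {A Q : Type} (N : NFA' A Q) (γ : List A) (a : A) (q : Q) :
    N.deltaStar q (γ ++ [a]) = ⋃ p ∈ N.deltaStar q γ, N.delta p a := by
  induction γ generalizing q with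
  | nil => simp [NFA'.deltaStar]
  | cons c γ ih =>
    show N.deltaStar q (c :: (γ ++ [a])) = _
    ext x
    simp only [NFA'.deltaStar, Set.mem_iUnion, ih]
    constructor
    · rintro ⟨r, hr, p, hp, hx⟩; exact ⟨p, ⟨r, hr, hp⟩, hx⟩
    · rintro ⟨p, ⟨r, hr, hp⟩, hx⟩; exact ⟨r, hr, p, hp, hx⟩

lemma key_colex {A Q : Type} [LinearOrder A] (N : NFA' A Q)
    (le : Q → Q → Prop) (hcolex : IsColexNFA N le) :
    ∀ n (α β : List A), α.length + β.length ≤ n → ∀ u v, le u v → u ≠ v →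
      u ∈ N.Iw α → v ∈ N.Iw β → (α ∉ N.Iq v ∨ β ∉ N.Iq u) → colexLt α β := by
  intro n
  induction n with
  | zero =>
    intro α β hlen u v huv hne hα hβ _
    have hα0 : α = [] := List.eq_nil_of_length_eq_zero (by omega)
    have hβ0 : β = [] := List.eq_nil_of_length_eq_zero (by omega)
    subst hα0; subst hβ0
    have hu : u = N.start := by simpa [NFA'.Iw, NFA'.deltaStar] using hα
    have hv : v = N.start := by simpa [NFA'.Iw, NFA'.deltaStar] using hβ
    exact absurd (hu.trans hv.symm) hne
  | succ n ih =>
    intro α β hlen u v huv hne hα hβ hcond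
    rcases List.eq_nil_or_concat β with rfl | ⟨β', b, rfl⟩
    all_goals try simp only [List.concat_eq_append] at *
    · -- β = []
      have hv : v = N.start := by simpa [NFA'.Iw, NFA'.deltaStar] using hβ
      rcases List.eq_nil_or_concat α with rfl | ⟨α', a, rfl⟩
      all_goals try simp only [List.concat_eq_append] at *
      · have hu : u = N.start := by simpa [NFA'.Iw, NFA'.deltaStar] using hα
        exact absurd (hu.trans hv.symm) hne
      · -- a ∈ λ u, ⊥ ∈ λ v : contradiction with ax1
        rw [NFA'.Iw, deltaStar_snoc] at hα
        simp only [Set.mem_iUnion] at hα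
        obtain ⟨u', hu', huδ⟩ := hα
        have ha : (a : WithBot A) ∈ N.lam u := Or.inl ⟨a, u', rfl, huδ⟩
        have hbot : (⊥ : WithBot A) ∈ N.lam v := Or.inr ⟨hv, rfl⟩
        have := hcolex.ax1 u v huv hne _ ha _ hbot
        exact absurd this (by simp)
    · rcases List.eq_nil_or_concat α with rfl | ⟨α', a, rfl⟩
      all_goals try simp only [List.concat_eq_append] at *
      · -- [] ≺ β' ++ [b]
        unfold colexLt
        simp only [List.reverse_append, List.reverse_cons, List.reverse_nil, List.nil_append]
        exact List.Lex.nil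
      · -- both nonempty
        rw [NFA'.Iw, deltaStar_snoc] at hα hβ
        simp only [Set.mem_iUnion] at hα hβ
        obtain ⟨u', hu', huδ⟩ := hα
        obtain ⟨v', hv', hvδ⟩ := hβ
        have ha : (a : WithBot A) ∈ N.lam u := Or.inl ⟨a, u', rfl, huδ⟩
        have hb : (b : WithBot A) ∈ N.lam v := Or.inl ⟨b, v', rfl, hvδ⟩
        have hab : a ≤ b := by
          have := hcolex.ax1 u v huv hne _ ha _ hb
          exact_mod_cast this
        rcases lt_or_eq_of_le hab with hlt | rfl
        · unfold colexLt
          simp only [List.reverse_append, List.reverse_cons, List.reverse_nil, List.nil_append,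
            List.cons_append]
          exact List.Lex.rel hlt
        · -- a = b
          have hle' : le u' v' := hcolex.ax2 a u v u' v' huδ hvδ huv hne
          by_cases heq : u' = v'
          · subst heq
            -- both α, β ∈ I_u ∩ I_v : contradicts hcond
            exfalso
            have hαv : α' ++ [a] ∈ N.Iq v := by
              show v ∈ N.Iw (α' ++ [a])
              rw [NFA'.Iw, deltaStar_snoc]
              simp only [Set.mem_iUnion]
              exact ⟨u', hu', hvδ⟩
            have hβu : β' ++ [a] ∈ N.Iq u := by
              show u ∈ N.Iw (β' ++ [a])
              rw [NFA'.Iw, deltaStar_snoc]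
              simp only [Set.mem_iUnion]
              exact ⟨u', hv', huδ⟩
            rcases hcond with h | h
            · exact h hαv
            · exact h hβu
          · have hcond' : α' ∉ N.Iq v' ∨ β' ∉ N.Iq u' := by
              rcases hcond with h | h
              · left
                intro hmem
                apply h
                show v ∈ N.Iw (α' ++ [a])
                rw [NFA'.Iw, deltaStar_snoc]
                simp only [Set.mem_iUnion]
                exact ⟨v', hmem, hvδ⟩
              · right
                intro hmem
                apply h
                show u ∈ N.Iw (β' ++ [a])
                rw [NFA'.Iw, deltaStar_snoc]
                simp only [Set.mem_iUnion]
                exact ⟨u', hmem, huδ⟩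
            have hlen' : α'.length + β'.length ≤ n := by
              simp only [List.length_append, List.length_singleton] at hlen
              omega
            have hIH := ih α' β' hlen' u' v' hle' heq hu' hv' hcond'
            unfold colexLt at hIH ⊢
            simp only [List.reverse_append, List.reverse_cons, List.reverse_nil, List.nil_append,
              List.cons_append]
            exact List.Lex.cons hIH

/-- for any co-lex order on an NFA, if `u < v` then `α ≺ β` for all
`α ∈ I_u`, `β ∈ I_v` such that not both `α` and `β` belong to `I_u ∩ I_v`. -/
theorem stmt_2 {A Q : Type} [LinearOrder A] [Fintype A] [Fintype Q]
    (N : NFA' A Q) (hreach : N.Reachable) (huse : N.Useful)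
    (le : Q → Q → Prop) (hcolex : IsColexNFA N le)
    (u v : Q) (huv : le u v) (hne : u ≠ v) :
    ∀ α ∈ N.Iq u, ∀ β ∈ N.Iq v,
      ¬(α ∈ N.Iq u ∩ N.Iq v ∧ β ∈ N.Iq u ∩ N.Iq v) → colexLt α β := by
  intro α hα β hβ hnot
  have hcond : α ∉ N.Iq v ∨ β ∉ N.Iq u := by
    by_contra h
    push_neg at h
    exact hnot ⟨⟨hα, h.1⟩, ⟨h.2, hβ⟩⟩
  exact key_colex N le hcolex (α.length + β.length) α β le_rfl u v huv hne hα hβ hcond
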